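/- Let Φ : α^ℤ → α^ℤ be a cellular automaton on a finite alphabet α with quiescent state B. If for every x ∈ α^ℤ there exists n ∈ ℕ such that Φ^n(x) lies in the Besicovitch class of B^∞ (i.e., d_B(Φ^n(x), B^∞) = 0), then Φ is nilpotent. -/

import Mathlib

set_option linter.unusedSectionVars false
set_option maxHeartbeats 1000000


open Filter

/-- The Besicovitch pseudometric on `α^ℤ`:
`d_B(x,y) = limsup_{n→∞} |{i ∈ [-n,n] : x_i ≠ y_i}| / (2n+1)`. -/
noncomputable def besicovitchDist {α : Type} [DecidableEq α] (x y : ℤ → α) : ℝ :=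
  Filter.limsup (fun n : ℕ =>
      (((Finset.Icc (-(n : ℤ)) (n : ℤ)).filter fun i => x i ≠ y i).card : ℝ) /
        (2 * (n : ℝ) + 1))
    Filter.atTop


def Sh {α : Type} (m : ℤ) (x : ℤ → α) : ℤ → α := fun i => x (i + m)

lemma Sh_Sh {α : Type} (a b : ℤ) (x : ℤ → α) : Sh a (Sh b x) = Sh (b + a) x := by
  funext i; simp only [Sh]; ring_nf

lemma Sh_zero {α : Type} (x : ℤ → α) : Sh 0 x = x := by funext i; simp [Sh]

lemma Sh_comm {α : Type} (Φ : (ℤ → α) → (ℤ → α))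
    (hcomm : ∀ x : ℤ → α, Φ (fun i => x (i + 1)) = fun i => Φ x (i + 1)) :
    ∀ (m : ℤ) (x : ℤ → α), Φ (Sh m x) = Sh m (Φ x) := by
  have h1 : ∀ x : ℤ → α, Φ (Sh 1 x) = Sh 1 (Φ x) := fun x => hcomm x
  intro m
  induction m using Int.induction_on with
  | zero => intro x; rw [Sh_zero, Sh_zero]
  | succ k ih =>
      intro x
      have : Sh ((k : ℤ) + 1) x = Sh 1 (Sh k x) := by rw [Sh_Sh]
      rw [this, h1, ih, Sh_Sh]
  | pred k ih =>
      intro x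
      have e1 : Sh 1 (Sh (-(k : ℤ) - 1) x) = Sh (-(k : ℤ)) x := by rw [Sh_Sh]; ring_nf
      have e2 : Sh 1 (Φ (Sh (-(k : ℤ) - 1) x)) = Sh 1 (Sh (-(k : ℤ) - 1) (Φ x)) := by
        rw [← h1, e1, ih]
        rw [Sh_Sh]; ring_nf
      have e3 := congrArg (Sh (-1)) e2
      rw [Sh_Sh, Sh_Sh] at e3
      norm_num at e3
      simpa [Sh_zero] using e3

lemma radius_exists {α : Type} [Fintype α] [DecidableEq α] [TopologicalSpace α] [DiscreteTopology α]
    (Φ : (ℤ → α) → (ℤ → α)) (hcont : Continuous Φ) :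
    ∃ r : ℕ, ∀ x y : ℤ → α, (∀ j : ℤ, j.natAbs ≤ r → x j = y j) → Φ x 0 = Φ y 0 := by
  have hα : Finite α := Finite.of_fintype α
  have e_cont : Continuous (fun x : ℤ → α => Φ x 0) := (continuous_apply 0).comp hcont
  -- for each x, an open set where e is constant
  have hU : ∀ x : ℤ → α, IsOpen ((fun y : ℤ → α => Φ y 0) ⁻¹' {Φ x 0}) := fun x =>
    e_cont.isOpen_preimage _ (isOpen_discrete _)
  -- choose finite coordinate sets
  have hbasic : ∀ x : ℤ → α, ∃ I : Finset ℤ,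
      (I : Set ℤ).pi (fun i => ({x i} : Set α)) ⊆ (fun y : ℤ → α => Φ y 0) ⁻¹' {Φ x 0} := by
    intro x
    obtain ⟨I, u, hIu, hsub⟩ := (isOpen_pi_iff.mp (hU x)) x rfl
    exact ⟨I, fun y hy => hsub (fun a ha => by
      have := hy a ha
      simp only [Set.mem_singleton_iff] at this
      rw [this]; exact (hIu a ha).2)⟩
  choose I hI using hbasic
  -- compactness
  have hcov : (Set.univ : Set (ℤ → α)) ⊆ ⋃ x, ((I x : Set ℤ)).pi (fun i => ({x i} : Set α)) := by
    intro x _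
    exact Set.mem_iUnion.mpr ⟨x, fun a _ => rfl⟩
  obtain ⟨s, hs⟩ := isCompact_univ.elim_finite_subcover
    (fun x : ℤ → α => ((I x : Set ℤ)).pi (fun i => ({x i} : Set α)))
    (fun x => isOpen_set_pi (I x).finite_toSet (fun i _ => isOpen_discrete _)) hcov
  refine ⟨(s.biUnion I).sup (fun i => i.natAbs), fun x y hxy => ?_⟩
  obtain ⟨x₀, hx₀s, hx₀⟩ := Set.mem_iUnion₂.mp (hs (Set.mem_univ x))
  have hy₀ : y ∈ ((I x₀ : Set ℤ)).pi (fun i => ({x₀ i} : Set α)) := by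
    intro a ha
    have h1 : x a = x₀ a := hx₀ a ha
    have h2 : x a = y a := by
      apply hxy
      exact Finset.le_sup (Finset.mem_biUnion.mpr ⟨x₀, hx₀s, ha⟩)
    simp only [Set.mem_singleton_iff]
    rw [← h2, h1]
  have e1 := hI x₀ hx₀
  have e2 := hI x₀ hy₀
  simp only [Set.mem_preimage, Set.mem_singleton_iff] at e1 e2
  rw [e1, e2]

section loc
variable {α : Type} [Fintype α] [DecidableEq α] [TopologicalSpace α] [DiscreteTopology α]
variable (Φ : (ℤ → α) → (ℤ → α))

lemma local_dep (r : ℕ)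
    (hr : ∀ x y : ℤ → α, (∀ j : ℤ, j.natAbs ≤ r → x j = y j) → Φ x 0 = Φ y 0)
    (hcomm : ∀ x : ℤ → α, Φ (fun i => x (i + 1)) = fun i => Φ x (i + 1)) :
    ∀ (x y : ℤ → α) (i : ℤ), (∀ j : ℤ, (j - i).natAbs ≤ r → x j = y j) → Φ x i = Φ y i := by
  intro x y i hxy
  have e1 : Φ (Sh i x) 0 = Φ (Sh i y) 0 := by
    apply hr
    intro j hj
    simp only [Sh]
    apply hxy
    simpa using hj
  have c1 := Sh_comm Φ hcomm i x
  have c2 := Sh_comm Φ hcomm i y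
  have d1 : Φ (Sh i x) 0 = Φ x i := by rw [c1]; simp [Sh]
  have d2 : Φ (Sh i y) 0 = Φ y i := by rw [c2]; simp [Sh]
  rw [← d1, ← d2, e1]

lemma iter_dep (r : ℕ)
    (hr : ∀ x y : ℤ → α, (∀ j : ℤ, j.natAbs ≤ r → x j = y j) → Φ x 0 = Φ y 0)
    (hcomm : ∀ x : ℤ → α, Φ (fun i => x (i + 1)) = fun i => Φ x (i + 1)) :
    ∀ (n : ℕ) (x y : ℤ → α) (i : ℤ),
      (∀ j : ℤ, (j - i).natAbs ≤ r * n → x j = y j) → Φ^[n] x i = Φ^[n] y i := by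
  intro n
  induction n with
  | zero =>
      intro x y i hxy
      simpa using hxy i (by simp)
  | succ n ih =>
      intro x y i hxy
      rw [Function.iterate_succ_apply, Function.iterate_succ_apply]
      apply ih
      intro j hj
      apply local_dep Φ r hr hcomm
      intro k hk
      apply hxy
      have hrn : r * (n+1) = r * n + r := by ring
      omega

lemma iter_comm
    (hcomm : ∀ x : ℤ → α, Φ (fun i => x (i + 1)) = fun i => Φ x (i + 1)) :
    ∀ (n : ℕ) (m : ℤ) (x : ℤ → α), Φ^[n] (Sh m x) = Sh m (Φ^[n] x) := by
  intro n
  induction n with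
  | zero => intro m x; simp
  | succ n ih =>
      intro m x
      rw [Function.iterate_succ_apply, Function.iterate_succ_apply, Sh_comm Φ hcomm, ih]

end loc

/-- Configuration with, in each region `[4^t, 2*4^t]`, periodic copies of the
window of radius `r*n` (where `n = (Nat.unpair t).1`) of `X n` centered at `P n`. -/
def zconf {α : Type} (B : α) (X : ℕ → ℤ → α) (P : ℕ → ℤ) (r : ℕ) : ℤ → α :=
  fun i =>
    if 1 ≤ i ∧ i ≤ 2 * 4 ^ (Nat.log 4 i.toNat) then
      X (Nat.unpair (Nat.log 4 i.toNat)).1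
        (P (Nat.unpair (Nat.log 4 i.toNat)).1
          - r * (Nat.unpair (Nat.log 4 i.toNat)).1
          + (i - 4 ^ (Nat.log 4 i.toNat)) % (2 * r * (Nat.unpair (Nat.log 4 i.toNat)).1 + 1))
    else B

lemma zconf_window {α : Type} (B : α) (X : ℕ → ℤ → α) (P : ℕ → ℤ) (r : ℕ)
    (t j : ℕ)
    (hfit : ((4:ℤ)^t + r * (Nat.unpair t).1 + j * (2 * r * (Nat.unpair t).1 + 1))
        + r * (Nat.unpair t).1 ≤ 2 * 4^t)
    (o : ℤ) (ho : o.natAbs ≤ r * (Nat.unpair t).1) :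
    zconf B X P r ((4:ℤ)^t + r * (Nat.unpair t).1 + j * (2 * r * (Nat.unpair t).1 + 1) + o)
      = X (Nat.unpair t).1 (P (Nat.unpair t).1 + o) := by
  set n := (Nat.unpair t).1 with hn
  set K : ℤ := 2 * r * n + 1 with hK
  set c : ℤ := (4:ℤ)^t + r * n + j * K with hc
  set i : ℤ := c + o with hi
  have hKpos : 0 < K := by positivity
  have hrn2 : (2:ℤ) * r * n = 2 * ((r:ℤ) * n) := by ring
  have hons : (0:ℤ) ≤ (r:ℤ) * n + o ∧ (r:ℤ) * n + o < K := by
    constructor <;> omega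
  have hM1 : (1:ℤ) ≤ (4:ℤ)^t := one_le_pow₀ (by norm_num)
  have hjK : (0:ℤ) ≤ j * K := by positivity
  have hilb : (4:ℤ)^t ≤ i := by
    have : -(r*n : ℤ) ≤ o := by omega
    simp only [hi, hc]; omega
  have hiub : i ≤ 2 * (4:ℤ)^t := by
    have : o ≤ (r*n : ℤ) := by omega
    omega
  -- toNat facts
  have hipos : (0:ℤ) ≤ i := by omega
  have hcast : ((4:ℕ)^t : ℤ) = (4:ℤ)^t := by push_cast; ring
  have htn1 : (4:ℕ)^t ≤ i.toNat := by
    have := hilb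
    omega
  have htn2 : i.toNat < (4:ℕ)^(t+1) := by
    have h4 : ((4:ℕ)^(t+1) : ℤ) = 4 * (4:ℤ)^t := by push_cast; ring
    have : i < 4 * (4:ℤ)^t := by omega
    omega
  have hlog : Nat.log 4 i.toNat = t := Nat.log_eq_of_pow_le_of_lt_pow htn1 htn2
  have hcond : 1 ≤ i ∧ i ≤ 2 * 4 ^ (Nat.log 4 i.toNat) := by
    rw [hlog]
    exact ⟨hilb.trans' hM1, by omega⟩
  have hmod : (i - 4^t) % K = (r:ℤ) * n + o := by
    have : i - 4^t = ((r:ℤ) * n + o) + K * j := by rw [hi, hc]; ring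
    rw [this, Int.add_mul_emod_self_left, Int.emod_eq_of_lt hons.1 hons.2]
  show zconf B X P r i = X n (P n + o)
  unfold zconf
  rw [if_pos hcond, hlog, ← hn, ← hK, hmod]
  congr 1
  ring

/-- If every configuration of a cellular automaton `Φ` with quiescent
state `B` eventually reaches the Besicovitch class of `B^∞`, then `Φ` is nilpotent. -/
theorem nilpotent_of_besicovitch_class_reached
    {α : Type} [Fintype α] [DecidableEq α] [TopologicalSpace α] [DiscreteTopology α]
    (B : α) (Φ : (ℤ → α) → (ℤ → α))
    (hcont : Continuous Φ)
    (hcomm : ∀ x : ℤ → α, Φ (fun i => x (i + 1)) = fun i => Φ x (i + 1))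
    (hq : Φ (fun _ => B) = fun _ => B)
    (h : ∀ x : ℤ → α, ∃ n : ℕ, besicovitchDist (Φ^[n] x) (fun _ => B) = 0) :
    ∃ n : ℕ, ∀ x : ℤ → α, Φ^[n] x = fun _ => B := by
  classical
  by_contra hcon
  push_neg at hcon
  have hwit : ∀ n : ℕ, ∃ (x : ℤ → α) (p : ℤ), Φ^[n] x p ≠ B := by
    intro n
    obtain ⟨x, hx⟩ := hcon n
    obtain ⟨p, hp⟩ := Function.ne_iff.mp hx
    exact ⟨x, p, hp⟩
  choose X P hXP using hwit
  obtain ⟨r, hr⟩ := radius_exists Φ hcont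
  set z : ℤ → α := zconf B X P r with hz
  have hclaim : ∀ n : ℕ,
      (1:ℝ)/(20*(2*(r:ℝ)*(n:ℝ)+1)) ≤ besicovitchDist (Φ^[n] z) (fun _ => B) := by
    intro n
    have hbound : ∀ N : ℕ,
        (((Finset.Icc (-(N:ℤ)) (N:ℤ)).filter fun i => Φ^[n] z i ≠ (fun _ => B) i).card : ℝ) /
          (2*(N:ℝ)+1) ≤ 1 := by
      intro N
      rw [div_le_one (by positivity)]
      have h1 : ((Finset.Icc (-(N:ℤ)) (N:ℤ)).filter fun i => Φ^[n] z i ≠ (fun _ => B) i).card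
          ≤ (Finset.Icc (-(N:ℤ)) (N:ℤ)).card := Finset.card_filter_le _ _
      have h2 : (Finset.Icc (-(N:ℤ)) (N:ℤ)).card = 2*N+1 := by
        rw [Int.card_Icc]; omega
      rw [h2] at h1
      have h3 : (((Finset.Icc (-(N:ℤ)) (N:ℤ)).filter
          fun i => Φ^[n] z i ≠ (fun _ => B) i).card : ℝ) ≤ ((2*N+1 : ℕ) : ℝ) :=
        Nat.cast_le.mpr h1
      push_cast at h3
      linarith
    unfold besicovitchDist
    apply le_limsup_of_frequently_le ?_ (isBoundedUnder_of ⟨1, fun N => hbound N⟩)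
    rw [Filter.frequently_atTop]
    intro N₀
    set K : ℕ := 2*r*n+1 with hKdef
    set t : ℕ := Nat.pair n (max N₀ (4*K)) with ht
    have hunp : (Nat.unpair t).1 = n := by rw [ht, Nat.unpair_pair]
    have htge : max N₀ (4*K) ≤ t := Nat.right_le_pair _ _
    set M : ℕ := 4^t with hM
    have hMt : t < M := Nat.lt_pow_self (by norm_num : 1 < 4)
    have hMK : 4*K + 1 ≤ M := by
      have := le_max_right N₀ (4*K); omega
    set N : ℕ := 2*M with hN
    have hNN₀ : N₀ ≤ N := by
      have := le_max_left N₀ (4*K); omega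
    refine ⟨N, hNN₀, ?_⟩
    set J : ℕ := M / (2*K) with hJ
    have hKpos : 0 < K := by omega
    have hdm0 := Nat.div_add_mod M (2*K)
    have hmlt : M % (2*K) < 2*K := Nat.mod_lt _ (by omega)
    have e0 : 2*K*(M/(2*K)) = 2*(K*(M/(2*K))) := by ring
    have hdm : 2*(K*J) + M % (2*K) = M := by rw [hJ]; omega
    have hfits : K*J ≤ M := by omega
    have hdens : 4*M + 1 ≤ 20*(K*J) := by omega
    -- cast facts
    have hMc : ((M:ℕ):ℤ) = (4:ℤ)^t := by rw [hM]; push_cast; ring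
    -- centers are alive at time n
    have hcenter : ∀ j : ℕ, j < J →
        Φ^[n] z ((4:ℤ)^t + (r:ℤ)*n + (j:ℤ)*(2*(r:ℤ)*n+1)) ≠ B := by
      intro j hj
      set c : ℤ := (4:ℤ)^t + (r:ℤ)*n + (j:ℤ)*(2*(r:ℤ)*n+1) with hc
      -- the window around c fits in the region
      have hfitN : M + r*n + j*K + r*n ≤ 2*M := by
        have e1 : (j+1)*K = j*K + K := by ring
        have e2 : (j+1)*K ≤ J*K := Nat.mul_le_mul_right K (by omega)
        have e3 : J*K = K*J := by ring
        have e4 : K = 2*r*n+1 := hKdef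
        have e5 : 2*(r*n) = 2*r*n := by ring
        omega
      have hfit : c + (r:ℤ)*n ≤ 2*(4:ℤ)^t := by
        have hcast : ((M + r*n + j*K + r*n : ℕ) : ℤ) ≤ ((2*M : ℕ) : ℤ) := by
          exact_mod_cast hfitN
        push_cast [hKdef] at hcast
        rw [hc, ← hMc]
        push_cast
        linarith
      -- z agrees with a shift of X n around c
      have hagree : ∀ jj : ℤ, (jj - c).natAbs ≤ r*n → z jj = Sh (P n - c) (X n) jj := by
        intro jj hjj
        have hw := zconf_window B X P r t j (by rw [hunp]; push_cast; push_cast at hfit; linarith [hfit]) (jj - c)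
          (by rw [hunp]; exact hjj)
        rw [hunp] at hw
        have hcc : (4:ℤ)^t + (r:ℤ)*n + (j:ℤ)*(2*(r:ℤ)*n+1) + (jj - c) = jj := by
          rw [hc]; ring
        rw [hcc] at hw
        rw [hz]
        rw [hw]
        simp only [Sh]
        congr 1
        ring
      have hstep : Φ^[n] z c = Φ^[n] (Sh (P n - c) (X n)) c := by
        apply iter_dep Φ r hr hcomm n
        intro jj hjj
        exact hagree jj hjj
      rw [hstep, iter_comm Φ hcomm]
      simp only [Sh]
      have : c + (P n - c) = P n := by ring
      rw [this]
      exact hXP n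
    -- counting
    have hcard : J ≤ ((Finset.Icc (-(N:ℤ)) (N:ℤ)).filter
        fun i => Φ^[n] z i ≠ (fun _ => B) i).card := by
      have hinj : Set.InjOn (fun j : ℕ => (4:ℤ)^t + (r:ℤ)*n + (j:ℤ)*(2*(r:ℤ)*n+1))
          ↑(Finset.range J) := by
        intro j1 _ j2 _ heq
        simp only at heq
        have hKz : (0:ℤ) < 2*(r:ℤ)*n+1 := by positivity
        have h' : (j1:ℤ)*(2*(r:ℤ)*n+1) = (j2:ℤ)*(2*(r:ℤ)*n+1) := by linarith
        have := mul_right_cancel₀ (ne_of_gt hKz) h'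
        exact_mod_cast this
      have hmaps : ∀ j ∈ Finset.range J,
          (4:ℤ)^t + (r:ℤ)*n + (j:ℤ)*(2*(r:ℤ)*n+1) ∈
            (Finset.Icc (-(N:ℤ)) (N:ℤ)).filter fun i => Φ^[n] z i ≠ (fun _ => B) i := by
        intro j hj
        rw [Finset.mem_range] at hj
        rw [Finset.mem_filter, Finset.mem_Icc]
        refine ⟨⟨?_, ?_⟩, hcenter j hj⟩
        · have h0 : (0:ℤ) ≤ (4:ℤ)^t + (r:ℤ)*n + (j:ℤ)*(2*(r:ℤ)*n+1) := by positivity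
          have hNc : (0:ℤ) ≤ (N:ℤ) := by positivity
          linarith
        · -- c ≤ N
          have hfitN : M + r*n + j*K + r*n ≤ 2*M := by
            have e1 : (j+1)*K = j*K + K := by ring
            have e2 : (j+1)*K ≤ J*K := Nat.mul_le_mul_right K (by omega)
            have e3 : J*K = K*J := by ring
            have e5 : 2*(r*n) = 2*r*n := by ring
            omega
          have hcast : ((M + r*n + j*K + r*n : ℕ) : ℤ) ≤ ((2*M : ℕ) : ℤ) := by
            exact_mod_cast hfitN
          push_cast [hKdef] at hcast
          rw [hN, ← hMc]
          push_cast
          linarith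
      have := Finset.card_le_card_of_injOn _ hmaps hinj
      simpa using this
    -- density estimate
    have hKcast : ((K:ℕ):ℝ) = 2*(r:ℝ)*n+1 := by rw [hKdef]; push_cast; ring
    have hKR : (0:ℝ) < 20*(2*(r:ℝ)*n+1) := by positivity
    rw [div_le_div_iff₀ hKR (by positivity)]
    have hc1 : (J:ℝ) ≤ (((Finset.Icc (-(N:ℤ)) (N:ℤ)).filter
        fun i => Φ^[n] z i ≠ (fun _ => B) i).card : ℝ) := Nat.cast_le.mpr hcard
    have hc2 : 2*(N:ℝ)+1 ≤ 20*((K:ℝ)*(J:ℝ)) := by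
      have : ((4*M+1 : ℕ):ℝ) ≤ ((20*(K*J) : ℕ):ℝ) := Nat.cast_le.mpr hdens
      push_cast at this
      rw [hN]
      push_cast
      linarith
    have hKnn : (0:ℝ) ≤ (K:ℝ) := by positivity
    nlinarith [hc1, hc2, hKnn, hKcast]
  obtain ⟨n, hn0⟩ := h z
  have h1 := hclaim n
  rw [hn0] at h1
  have h2 : (0:ℝ) < 1/(20*(2*(r:ℝ)*(n:ℝ)+1)) := by positivity
  linarith
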